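/- Let J ≥ 2 classes have elliptically symmetric densities on ℝ^d of the form f_j(x) = C_j |det Σ_j|^{-1/2} φ_j(δ_j(x)) for j = 1,…,J, where C_j > 0, Σ_j is positive definite, φ_j : ℝ≥0 → ℝ>0, and δ_j(x) = ((x−μ_j)ᵀ Σ_j^{-1} (x−μ_j))^{1/2}. Let π_1,…,π_J > 0 with Σ_j π_j = 1 be prior probabilities and define the posterior probabilities p(j | x) = π_j f_j(x) / Σ_{k=1}^J π_k f_k(x). Then there exist functions g_{jk} : ℝ → ℝ (1 ≤ j ≤ J−1, 1 ≤ k ≤ J) such that, writing g_j(x) = Σ_{k=1}^J g_{jk}(δ_k(x)), one has p(j | x) = exp(g_j(x)) / (1 + Σ_{k=1}^{J−1} exp(g_k(x))) for j = 1,…,J−1 and p(J | x) = 1 / (1 + Σ_{k=1}^{J−1} exp(g_k(x))) for every x ∈ ℝ^d. -/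

import Mathlib

open MeasureTheory Matrix Real
open scoped BigOperators

noncomputable section

/-- If the densities of `J ≥ 2` competing classes are elliptically
symmetric, `f j x = C j * |det Σ j| ^ (-1/2) * φ j (δ j x)` where
`δ j x = ((x - μ j)ᵀ (Σ j)⁻¹ (x - μ j))^(1/2)` is the Mahalanobis distance, then the
posterior probabilities `p j x = prior j * f j x / ∑ k, prior k * f k x` satisfy an additive
logistic regression model in the Mahalanobis distances `δ 1 x, …, δ J x`. -/
theorem posterior_GAM_of_elliptic
    (d J : ℕ) (hJ : 2 ≤ J)
    (μ : Fin J → EuclideanSpace ℝ (Fin d))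
    (Sg : Fin J → Matrix (Fin d) (Fin d) ℝ)
    (hSg : ∀ j, (Sg j).PosDef)
    (C : Fin J → ℝ) (hC : ∀ j, 0 < C j)
    (φ : Fin J → ℝ → ℝ) (hφ : ∀ j t, 0 ≤ t → 0 < φ j t)
    (δ : Fin J → EuclideanSpace ℝ (Fin d) → ℝ)
    (hδ : ∀ j x, δ j x = Real.sqrt ((x - μ j) ⬝ᵥ (Sg j)⁻¹.mulVec (x - μ j)))
    (f : Fin J → EuclideanSpace ℝ (Fin d) → ℝ)
    (hf : ∀ j x, f j x = C j * |(Sg j).det| ^ (-(1 : ℝ) / 2) * φ j (δ j x))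
    (prior : Fin J → ℝ) (hprior : ∀ j, 0 < prior j) (hprior1 : ∑ j, prior j = 1)
    (p : Fin J → EuclideanSpace ℝ (Fin d) → ℝ)
    (hp : ∀ j x, p j x = prior j * f j x / ∑ k, prior k * f k x)
    -- the distinguished "last" class
    (L : Fin J) (hL : (L : ℕ) = J - 1) :
    ∃ g : Fin J → Fin J → ℝ → ℝ,
      ∀ x : EuclideanSpace ℝ (Fin d),
        (∀ j, j ≠ L →
          p j x = Real.exp (∑ k, g j k (δ k x)) /
            (1 + ∑ k ∈ Finset.univ.erase L, Real.exp (∑ k', g k k' (δ k' x)))) ∧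
        p L x =
          1 / (1 + ∑ k ∈ Finset.univ.erase L, Real.exp (∑ k', g k k' (δ k' x))) := by

  haveI : Nonempty (Fin J) := ⟨⟨0, by omega⟩⟩
  have hdetpos : ∀ j, (0:ℝ) < |(Sg j).det| ^ (-(1:ℝ) / 2) := fun j =>
    Real.rpow_pos_of_pos (abs_pos.mpr (hSg j).det_pos.ne') _
  have hfpos : ∀ j x, 0 < f j x := by
    intro j x
    rw [hf]
    exact mul_pos (mul_pos (hC j) (hdetpos j))
      (hφ j _ (by rw [hδ]; exact Real.sqrt_nonneg _))
  have hApos : ∀ j x, 0 < prior j * f j x := fun j x => mul_pos (hprior j) (hfpos j x)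
  have hSpos : ∀ x, 0 < ∑ k, prior k * f k x := fun x =>
    Finset.sum_pos (fun k _ => hApos k x) Finset.univ_nonempty
  refine ⟨fun j k t =>
    (if k = j then Real.log (prior j * (C j * |(Sg j).det| ^ (-(1:ℝ) / 2) * φ j t)) else 0)
    + (if k = L then -Real.log (prior L * (C L * |(Sg L).det| ^ (-(1:ℝ) / 2) * φ L t)) else 0),
    ?_⟩
  intro x
  have hsum : ∀ j : Fin J,
      (∑ k, ((if k = j then Real.log (prior j * (C j * |(Sg j).det| ^ (-(1:ℝ) / 2) * φ j (δ k x))) else 0)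
        + (if k = L then -Real.log (prior L * (C L * |(Sg L).det| ^ (-(1:ℝ) / 2) * φ L (δ k x))) else 0)))
      = Real.log (prior j * f j x) - Real.log (prior L * f L x) := by
    intro j
    rw [Finset.sum_add_distrib, Finset.sum_ite_eq' Finset.univ j, Finset.sum_ite_eq' Finset.univ L]
    simp [hf, mul_assoc, sub_eq_add_neg]
  have hexp : ∀ j : Fin J,
      Real.exp (∑ k, ((if k = j then Real.log (prior j * (C j * |(Sg j).det| ^ (-(1:ℝ) / 2) * φ j (δ k x))) else 0)
        + (if k = L then -Real.log (prior L * (C L * |(Sg L).det| ^ (-(1:ℝ) / 2) * φ L (δ k x))) else 0)))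
      = prior j * f j x / (prior L * f L x) := by
    intro j
    rw [hsum j, Real.exp_sub, Real.exp_log (hApos j x), Real.exp_log (hApos L x)]
  have hden : 1 + ∑ k ∈ Finset.univ.erase L,
      Real.exp (∑ k', ((if k' = k then Real.log (prior k * (C k * |(Sg k).det| ^ (-(1:ℝ) / 2) * φ k (δ k' x))) else 0)
        + (if k' = L then -Real.log (prior L * (C L * |(Sg L).det| ^ (-(1:ℝ) / 2) * φ L (δ k' x))) else 0)))
      = (∑ k, prior k * f k x) / (prior L * f L x) := by
    have : ∀ k ∈ Finset.univ.erase L,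
        Real.exp (∑ k', ((if k' = k then Real.log (prior k * (C k * |(Sg k).det| ^ (-(1:ℝ) / 2) * φ k (δ k' x))) else 0)
          + (if k' = L then -Real.log (prior L * (C L * |(Sg L).det| ^ (-(1:ℝ) / 2) * φ L (δ k' x))) else 0)))
        = prior k * f k x / (prior L * f L x) := fun k _ => hexp k
    rw [Finset.sum_congr rfl this, ← Finset.sum_div,
      ← Finset.add_sum_erase _ (fun k => prior k * f k x) (Finset.mem_univ L),
      add_div, div_self (hApos L x).ne']
  refine ⟨fun j hj => ?_, ?_⟩
  · rw [hp j x]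
    show prior j * f j x / (∑ k, prior k * f k x) = _
    rw [hexp j, hden]
    have h1 := (hApos L x).ne'
    have h2 := (hSpos x).ne'
    field_simp
    rw [eq_div_iff h1]; ring
  · rw [hp L x]
    show prior L * f L x / (∑ k, prior k * f k x) = _
    rw [hden, one_div_div]


end
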